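/- arXiv:2002.01739 — 4 statements merged into one kernel-verified Lean document; each statement's English description precedes it below -/
import Mathlib

section
/- Let p be a prime and n ≥ 2 an integer. For every integer d with 0 ≤ d ≤ pn−2, the congruence (−1)^d · C(pn−2, d) ≡ Σ (−1)^a · C(n−2, a) (mod p) holds, where the sum ranges over all triples (a,b,c) with 0 ≤ a ≤ n−2, 0 ≤ b ≤ p−1, 0 ≤ c ≤ p−1 and pa + b + c = d. -/
open Polynomial Finset

section
variable {R : Type*} [CommRing R]

lemma expand_one_sub_pow (y : R[X]) (m : ℕ) :
    (1 - y) ^ m = ∑ i ∈ range (m + 1), C ((-1 : R) ^ i * (m.choose i : R)) * y ^ i := by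
  rw [sub_eq_add_neg, add_comm, add_pow]
  refine Finset.sum_congr rfl fun i hi => ?_
  rw [neg_pow]
  simp [map_mul, map_pow, map_natCast]
  ring

lemma coeff_one_sub_X_pow (m d : ℕ) :
    ((1 - X : R[X]) ^ m).coeff d = (-1 : R) ^ d * (m.choose d : R) := by
  rw [expand_one_sub_pow, finset_sum_coeff]
  simp only [coeff_C_mul, coeff_X_pow, mul_ite, mul_one, mul_zero]
  by_cases h : d ∈ range (m + 1)
  · rw [Finset.sum_eq_single d]
    · simp
    · intro b _ hb; simp [Ne.symm hb]
    · intro hd; exact absurd h hd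
  · rw [Finset.sum_eq_zero, Nat.choose_eq_zero_of_lt (by simpa using h)]
    · simp
    · intro b hb
      have : d ≠ b := by intro e; subst e; exact h hb
      simp [this]

end

lemma one_sub_X_pow_card (p : ℕ) [Fact p.Prime] :
    (1 - X : (ZMod p)[X]) ^ (p - 1) = ∑ i ∈ range p, X ^ i := by
  have hp1 : 1 ≤ p := (Fact.out : p.Prime).one_lt.le
  have hX : (1 - X : (ZMod p)[X]) ≠ 0 := fun h => by simpa using congrArg (eval 0) h
  apply mul_left_cancel₀ hX
  have h1 : (1 - X : (ZMod p)[X]) * (1 - X) ^ (p - 1) = (1 - X) ^ p := by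
    rw [← pow_succ']
    congr 1
    omega
  rw [h1, sub_pow_char, one_pow]
  have h2 := geom_sum_mul (X : (ZMod p)[X]) p
  linear_combination h2

/-- **Elliptic surface congruence.** For a prime `p`, `n ≥ 2` and `0 ≤ d ≤ pn−2`,
`(−1)^d C(pn−2, d) ≡ Σ (−1)^a C(n−2, a) (mod p)`, the sum ranging over triples
`(a,b,c)` with `0 ≤ a ≤ n−2`, `0 ≤ b,c ≤ p−1` and `pa+b+c = d`. -/
theorem elliptic_surface_congruence (p n d : ℕ) (hp : p.Prime) (hn : 2 ≤ n)
    (hd : d ≤ p * n - 2) :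
    Int.ModEq (p : ℤ)
      ((-1 : ℤ) ^ d * ((p * n - 2).choose d : ℤ))
      (∑ t ∈ ((Finset.range (n - 1)) ×ˢ (Finset.range p) ×ˢ (Finset.range p)).filter
          (fun t => p * t.1 + t.2.1 + t.2.2 = d),
        (-1 : ℤ) ^ t.1 * ((n - 2).choose t.1 : ℤ)) := by
  haveI : Fact p.Prime := ⟨hp⟩
  rw [← ZMod.intCast_eq_intCast_iff]
  push_cast
  set k := n - 2 with hk
  have hn1 : n - 1 = k + 1 := by omega
  have hpn : p * n = p * k + 2 * p := by
    have : n = k + 2 := by omega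
    rw [this]; ring
  have hm : p * n - 2 = p * k + (p - 1) + (p - 1) := by
    have := hp.two_le; omega
  -- polynomial identity
  have hpoly : (1 - X : (ZMod p)[X]) ^ (p * n - 2)
      = ∑ a ∈ range (k + 1), ∑ b ∈ range p, ∑ c ∈ range p,
          C ((-1 : ZMod p) ^ a * (k.choose a : ZMod p)) * X ^ (p * a + b + c) := by
    rw [hm, pow_add, pow_add, pow_mul, sub_pow_char, one_pow, one_sub_X_pow_card,
      expand_one_sub_pow]
    rw [Finset.sum_mul, Finset.sum_mul]
    refine Finset.sum_congr rfl fun a _ => ?_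
    rw [mul_assoc, Finset.sum_mul_sum, Finset.mul_sum]
    refine Finset.sum_congr rfl fun b _ => ?_
    rw [Finset.mul_sum]
    refine Finset.sum_congr rfl fun c _ => ?_
    rw [← pow_mul, pow_add, pow_add]
    ring
  -- take coefficient d on both sides
  have hco := congrArg (fun q : (ZMod p)[X] => q.coeff d) hpoly
  simp only [coeff_one_sub_X_pow, finset_sum_coeff, coeff_C_mul, coeff_X_pow,
    mul_ite, mul_one, mul_zero] at hco
  rw [hco, Finset.sum_filter, hn1]
  rw [Finset.sum_product]
  refine Finset.sum_congr rfl fun a _ => ?_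
  rw [Finset.sum_product]
  refine Finset.sum_congr rfl fun b _ => Finset.sum_congr rfl fun c _ => ?_
  simp only [eq_comm]
end

section
/- Let p be a prime and n ≥ 2. Write d with 0 ≤ d ≤ pn−2 as d = pq + r with 0 ≤ r ≤ p−1. By Lucas' theorem type reasoning, (−1)^d C(pn−2, d) mod p can be computed from the base-p digits of pn−2 and d, and it agrees modulo p with Σ_{(a,b,c): pa+b+c=d, 0≤a≤n−2, 0≤b,c≤p−1} (−1)^a C(n−2, a). -/
open Finset

lemma card_pairs_small (p s : ℕ) (hs : s < p) :
    ((Finset.range p ×ˢ Finset.range p).filter (fun bc => bc.1 + bc.2 = s)).card = s + 1 := by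
  have him : ((Finset.range p ×ˢ Finset.range p).filter (fun bc => bc.1 + bc.2 = s))
      = (Finset.range (s+1)).image (fun b => (b, s - b)) := by
    ext ⟨b, c⟩
    simp only [Finset.mem_filter, Finset.mem_product, Finset.mem_range, Finset.mem_image,
      Prod.mk.injEq]
    constructor
    · rintro ⟨⟨hb, hc⟩, h⟩
      exact ⟨b, by omega, rfl, by omega⟩
    · rintro ⟨x, hx, rfl, rfl⟩
      omega
  rw [him, Finset.card_image_of_injective _ (fun a b hab => by simpa using congrArg Prod.fst hab),
    Finset.card_range]

lemma card_pairs_big (p s : ℕ) (hs : p ≤ s) :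
    ((Finset.range p ×ˢ Finset.range p).filter (fun bc => bc.1 + bc.2 = s)).card = 2 * p - 1 - s := by
  have him : ((Finset.range p ×ˢ Finset.range p).filter (fun bc => bc.1 + bc.2 = s))
      = (Finset.Ico (s + 1 - p) p).image (fun b => (b, s - b)) := by
    ext ⟨b, c⟩
    simp only [Finset.mem_filter, Finset.mem_product, Finset.mem_range, Finset.mem_image,
      Finset.mem_Ico, Prod.mk.injEq]
    constructor
    · rintro ⟨⟨hb, hc⟩, h⟩
      exact ⟨b, by omega, rfl, by omega⟩
    · rintro ⟨x, hx, rfl, rfl⟩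
      omega
  rw [him, Finset.card_image_of_injective _ (fun a b hab => by simpa using congrArg Prod.fst hab),
    Nat.card_Ico]
  omega

lemma choose_pred_pred (p : ℕ) (hp : p.Prime) : ∀ r, r < p →
    (((p - 2).choose r : ZMod p)) = (-1) ^ r * (r + 1) := by
  haveI : Fact p.Prime := ⟨hp⟩
  have hp2 := hp.two_le
  intro r
  induction r with
  | zero => simp
  | succ r ih =>
    intro hr
    have hrp : r < p := by omega
    have key := Nat.choose_succ_right_eq (p - 2) r
    have hkey : (((p-2).choose (r+1) : ZMod p)) * (r + 1) = ((p-2).choose r : ZMod p) * ((p - 2 - r : ℕ) : ZMod p) := by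
      exact_mod_cast congrArg (Nat.cast : ℕ → ZMod p) key
    have hsub : ((p - 2 - r : ℕ) : ZMod p) = -((r : ZMod p) + 2) := by
      have h1 : p - 2 - r = p - (r + 2) := by omega
      have h2 : r + 2 ≤ p := by omega
      rw [h1, Nat.cast_sub h2, ZMod.natCast_self]
      push_cast
      ring
    have hne : ((r : ZMod p) + 1) ≠ 0 := by
      have : (((r + 1 : ℕ)) : ZMod p) ≠ 0 := by
        rw [Ne, ZMod.natCast_eq_zero_iff]
        intro hdvd
        have := Nat.le_of_dvd (by omega) hdvd
        omega
      simpa using this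
    apply mul_right_cancel₀ hne
    rw [show ((r:ZMod p)+1) = ((r+1 : ℕ) : ZMod p) by push_cast; ring] at hkey ⊢
    rw [hkey, ih hrp, hsub]
    push_cast
    ring


open Finset

lemma sum_decomp (p n d : ℕ) :
    (∑ t ∈ ((Finset.range (n - 1)) ×ˢ (Finset.range p) ×ˢ (Finset.range p)).filter
        (fun t => p * t.1 + t.2.1 + t.2.2 = d),
      (-1 : ℤ) ^ t.1 * ((n - 2).choose t.1 : ℤ))
    = ∑ a ∈ Finset.range (n - 1),
        (((Finset.range p ×ˢ Finset.range p).filter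
            (fun bc => p * a + bc.1 + bc.2 = d)).card : ℤ) *
          ((-1 : ℤ) ^ a * ((n - 2).choose a : ℤ)) := by
  rw [Finset.sum_filter, Finset.sum_product]
  refine Finset.sum_congr rfl fun a _ => ?_
  rw [← Finset.sum_filter]
  show (∑ _bc ∈ (Finset.range p ×ˢ Finset.range p).filter
      (fun bc : ℕ × ℕ => p * a + bc.1 + bc.2 = d),
      ((-1 : ℤ) ^ a * ((n - 2).choose a : ℤ))) = _
  rw [Finset.sum_const, nsmul_eq_mul]

lemma card_eval (p d q r a : ℕ) (hp2 : 2 ≤ p) (hqr : d = p * q + r) (hr : r < p) :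
    ((Finset.range p ×ˢ Finset.range p).filter (fun bc => p * a + bc.1 + bc.2 = d)).card
    = if a = q then r + 1 else if a + 1 = q then p - 1 - r else 0 := by
  split_ifs with h1 h2
  · subst h1
    rw [Finset.filter_congr (fun bc _ => show (p * a + bc.1 + bc.2 = d) ↔ (bc.1 + bc.2 = r) by omega)]
    exact card_pairs_small p r hr
  · have hd' : d = p * a + (p + r) := by subst hqr; rw [← h2]; ring
    rw [Finset.filter_congr (fun bc _ => show (p * a + bc.1 + bc.2 = d) ↔ (bc.1 + bc.2 = p + r) by omega)]
    rw [card_pairs_big p (p + r) (by omega)]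
    omega
  · rw [Finset.card_eq_zero, Finset.filter_eq_empty_iff]
    rintro ⟨b, c⟩ hbc
    simp only [Finset.mem_product, Finset.mem_range] at hbc
    intro h
    rcases Nat.lt_or_ge a q with hlt | hge
    · have haq : a + 2 ≤ q := by omega
      have := Nat.mul_le_mul_left p haq
      have hexp : p * (a + 2) = p * a + 2 * p := by ring
      omega
    · have haq : q + 1 ≤ a := by omega
      have := Nat.mul_le_mul_left p haq
      have hexp : p * (q + 1) = p * q + p := by ring
      omega


lemma neg_one_pow_prime (p : ℕ) (hp : p.Prime) : ((-1 : ZMod p)) ^ p = -1 := by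
  rcases hp.eq_two_or_odd' with h2 | hodd
  · subst h2; decide
  · exact hodd.neg_one_pow

/-- Writing `d = pq + r` with `0 ≤ r ≤ p−1`, the quantity `(−1)^d C(pn−2, d)` is,
modulo `p` (by Lucas-type reasoning on base-`p` digits), equal to
`Σ (−1)^a C(n−2, a)` summed over triples `(a,b,c)` with `0 ≤ a ≤ n−2`,
`0 ≤ b,c ≤ p−1` and `pa+b+c = d`. -/
theorem elliptic_surface_congruence_via_lucas (p n d q r : ℕ) (hp : p.Prime) (hn : 2 ≤ n)
    (hd : d ≤ p * n - 2) (hqr : d = p * q + r) (hr : r ≤ p - 1) :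
    Int.ModEq (p : ℤ)
      ((-1 : ℤ) ^ d * ((p * n - 2).choose d : ℤ))
      (∑ t ∈ ((Finset.range (n - 1)) ×ˢ (Finset.range p) ×ˢ (Finset.range p)).filter
          (fun t => p * t.1 + t.2.1 + t.2.2 = d),
        (-1 : ℤ) ^ t.1 * ((n - 2).choose t.1 : ℤ)) := by
  haveI : Fact p.Prime := ⟨hp⟩
  have hp2 := hp.two_le
  have hrp : r < p := by omega
  have hdm : d % p = r := by rw [hqr, Nat.mul_add_mod, Nat.mod_eq_of_lt hrp]
  have hdd : d / p = q := by
    rw [hqr, Nat.mul_add_div (by omega), Nat.div_eq_of_lt hrp, add_zero]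
  have hpn : p * n = p * (n - 1) + p := by
    have h1 : n - 1 + 1 = n := by omega
    calc p * n = p * (n - 1 + 1) := by rw [h1]
      _ = p * (n - 1) + p := by ring
  have hM : p * n - 2 = p * (n - 1) + (p - 2) := by omega
  have hMm : (p * n - 2) % p = p - 2 := by
    rw [hM, Nat.mul_add_mod, Nat.mod_eq_of_lt (by omega)]
  have hMd : (p * n - 2) / p = n - 1 := by
    rw [hM, Nat.mul_add_div (by omega), Nat.div_eq_of_lt (by omega), add_zero]
  -- Lucas' theorem
  have lucas : (((p * n - 2).choose d : ℕ) : ZMod p)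
      = ((p - 2).choose r : ZMod p) * ((n - 1).choose q : ZMod p) := by
    have h := Choose.choose_modEq_choose_mod_mul_choose_div (p := p) (n := p * n - 2) (k := d)
    have h2 := (ZMod.intCast_eq_intCast_iff _ _ _).mpr h
    rw [hMm, hMd, hdm, hdd] at h2
    push_cast at h2
    exact_mod_cast h2
  -- sign fact
  have hneg : ((-1 : ZMod p)) ^ p = -1 := neg_one_pow_prime p hp
  have hsign : ((-1 : ZMod p)) ^ d = (-1) ^ q * (-1) ^ r := by
    rw [hqr, pow_add, pow_mul, hneg]
  have hrr : ((-1 : ZMod p)) ^ r * (-1) ^ r = 1 := by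
    rw [← pow_add, ← two_mul, pow_mul]
    simp
  rw [← ZMod.intCast_eq_intCast_iff, sum_decomp]
  have hS : (∑ a ∈ Finset.range (n - 1),
        (((Finset.range p ×ˢ Finset.range p).filter
            (fun bc => p * a + bc.1 + bc.2 = d)).card : ℤ) *
          ((-1 : ℤ) ^ a * ((n - 2).choose a : ℤ)))
      = ∑ a ∈ Finset.range (n - 1),
          (if a = q then (r + 1 : ℤ) else if a + 1 = q then ((p - 1 - r : ℕ) : ℤ) else 0) *
            ((-1 : ℤ) ^ a * ((n - 2).choose a : ℤ)) := by
    refine Finset.sum_congr rfl fun a _ => ?_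
    rw [card_eval p d q r a hp2 hqr hrp]
    split_ifs <;> push_cast <;> ring
  rw [hS]
  obtain _ | q' := q
  · -- q = 0
    have hsum : (∑ a ∈ Finset.range (n - 1),
          (if a = 0 then (r + 1 : ℤ) else if a + 1 = 0 then ((p - 1 - r : ℕ) : ℤ) else 0) *
            ((-1 : ℤ) ^ a * ((n - 2).choose a : ℤ)))
        = (r + 1 : ℤ) := by
      have : ∀ a ∈ Finset.range (n - 1),
          (if a = 0 then (r + 1 : ℤ) else if a + 1 = 0 then ((p - 1 - r : ℕ) : ℤ) else 0) *
            ((-1 : ℤ) ^ a * ((n - 2).choose a : ℤ))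
          = if a = 0 then (r + 1 : ℤ) * ((-1 : ℤ) ^ a * ((n - 2).choose a : ℤ)) else 0 := by
        intro a _
        split_ifs with h1 h2 <;> simp_all
      rw [Finset.sum_congr rfl this, Finset.sum_ite_eq' (Finset.range (n - 1)) 0]
      simp [Finset.mem_range]
      omega
    rw [hsum]
    push_cast
    rw [lucas, hsign, choose_pred_pred p hp r hrp]
    simp only [Nat.choose_zero_right, Nat.cast_one, pow_zero]
    calc (1 : ZMod p) * (-1) ^ r * ((-1) ^ r * (↑r + 1) * 1)
        = ((-1 : ZMod p)) ^ r * (-1) ^ r * (↑r + 1) := by ring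
      _ = ↑r + 1 := by rw [hrr, one_mul]
  · -- q = q' + 1
    have hnn : n - 1 = (n - 2) + 1 := by omega
    have hsum : (∑ a ∈ Finset.range (n - 1),
          (if a = q' + 1 then (r + 1 : ℤ) else if a + 1 = q' + 1 then ((p - 1 - r : ℕ) : ℤ) else 0) *
            ((-1 : ℤ) ^ a * ((n - 2).choose a : ℤ)))
        = (r + 1 : ℤ) * ((-1 : ℤ) ^ (q' + 1) * ((n - 2).choose (q' + 1) : ℤ))
          + ((p - 1 - r : ℕ) : ℤ) * ((-1 : ℤ) ^ q' * ((n - 2).choose q' : ℤ)) := by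
      have hpt : ∀ a ∈ Finset.range (n - 1),
          (if a = q' + 1 then (r + 1 : ℤ) else if a + 1 = q' + 1 then ((p - 1 - r : ℕ) : ℤ) else 0) *
            ((-1 : ℤ) ^ a * ((n - 2).choose a : ℤ))
          = (if a = q' + 1 then (r + 1 : ℤ) * ((-1 : ℤ) ^ a * ((n - 2).choose a : ℤ)) else 0)
            + (if a = q' then ((p - 1 - r : ℕ) : ℤ) * ((-1 : ℤ) ^ a * ((n - 2).choose a : ℤ)) else 0) := by
        intro a _
        by_cases h1 : a = q' + 1
        · subst h1
          rw [if_pos rfl, if_pos rfl, if_neg (show ¬(q' + 1 = q') by omega)]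
          ring
        · by_cases h2 : a = q'
          · simp only [if_neg h1, if_pos h2, if_pos (show a + 1 = q' + 1 by omega)]
            ring
          · simp only [if_neg h1, if_neg h2, if_neg (show ¬(a + 1 = q' + 1) by omega)]
            ring
      rw [Finset.sum_congr rfl hpt, Finset.sum_add_distrib,
        Finset.sum_ite_eq' (Finset.range (n - 1)) (q' + 1),
        Finset.sum_ite_eq' (Finset.range (n - 1)) q']
      congr 1
      · split_ifs with h
        · rfl
        · have hlt : n - 2 < q' + 1 := by
            simp only [Finset.mem_range] at h
            omega
          simp [Nat.choose_eq_zero_of_lt hlt]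
      · split_ifs with h
        · rfl
        · have hlt : n - 2 < q' := by
            simp only [Finset.mem_range] at h
            omega
          simp [Nat.choose_eq_zero_of_lt hlt]
    rw [hsum]
    push_cast
    rw [lucas, hsign, choose_pred_pred p hp r hrp, hnn, Nat.choose_succ_succ]
    have hpmr : ((p - 1 - r : ℕ) : ZMod p) = -((r : ZMod p) + 1) := by
      have h1 : p - 1 - r = p - (r + 1) := by omega
      rw [h1, Nat.cast_sub (by omega), ZMod.natCast_self]
      push_cast
      ring
    rw [hpmr]
    push_cast
    calc ((-1 : ZMod p)) ^ (q' + 1) * (-1) ^ r *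
          ((-1) ^ r * (↑r + 1) * (↑((n - 2).choose q') + ↑((n - 2).choose (q' + 1))))
        = ((-1 : ZMod p)) ^ r * (-1) ^ r *
            ((-1) ^ (q' + 1) * (↑r + 1) * (↑((n - 2).choose q') + ↑((n - 2).choose (q' + 1)))) := by
          ring
      _ = (-1) ^ (q' + 1) * (↑r + 1) * (↑((n - 2).choose q') + ↑((n - 2).choose (q' + 1))) := by
          rw [hrr, one_mul]
      _ = (↑r + 1) * ((-1) ^ (q' + 1) * ↑((n - 2).choose (q' + 1)))
          + -(↑r + 1) * ((-1) ^ q' * ↑((n - 2).choose q')) := by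
          rw [pow_succ]
          ring
end

section
/- Let G be a finite group and V a finite-dimensional complex representation of a central extension 𝔾 of G by T = U(1), on which the central T acts by scalar multiplication. For a subgroup H ≤ G, the H-fixed point set of the induced G-action on the complex projective space ℂP(V) is the disjoint union over all splittings j: H → 𝔾 (subgroups H(j) ≤ 𝔾 mapping isomorphically to H) of the projective spaces ℂP(V^{H(j)}) of the H(j)-fixed subspaces. In particular, if no splitting over H exists, ℂP(V)^H is empty. -/
/-- **Fixed points of `ℂP(V)` under a subgroup.** Let `1 → T → 𝔾 → G → 1` be a central
extension of a finite group `G` by the circle `T`, and let `V` be a complex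
`𝔾`-representation on which the central circle acts by scalar multiplication. For a
subgroup `H ≤ G`, a nonzero vector `v` spans an `H`-fixed line in `ℂP(V)` (i.e. every
element of the preimage of `H` maps `v` into its span) if and only if there is a
*unique* splitting `j` of the extension over `H` (a section `s : H →* 𝔾` of `π`,
i.e. a subgroup `H(j) ≤ 𝔾` mapping isomorphically to `H`) such that `v` is fixed by
`H(j)`; so `ℂP(V)^H = ⨆_j ℂP(V^{H(j)})`, a disjoint union over splittings. In
particular, if no splitting over `H` exists, `ℂP(V)^H` is empty. -/
theorem projectivization_fixed_points_of_central_circle_extension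
    {𝔾 : Type} [Group 𝔾] {G : Type} [Group G] [Finite G]
    (ι : Circle →* 𝔾) (π : 𝔾 →* G)
    (hι : Function.Injective ι)
    (hcentral : ∀ z : Circle, ι z ∈ Subgroup.center 𝔾)
    (hπ : Function.Surjective π)
    (hker : π.ker = ι.range)
    {V : Type} [AddCommGroup V] [Module ℂ V]
    (ρ : Representation ℂ 𝔾 V)
    (hscalar : ∀ (z : Circle) (v : V), ρ (ι z) v = (z : ℂ) • v)
    (H : Subgroup G) (v : V) (hv : v ≠ 0) :
    ((∀ g : 𝔾, π g ∈ H → ∃ c : ℂ, ρ g v = c • v) ↔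
      ∃! s : {s : H →* 𝔾 // ∀ h : H, π (s h) = (h : G)},
        ∀ h : H, ρ (s.1 h) v = v) ∧
    (IsEmpty {s : H →* 𝔾 // ∀ h : H, π (s h) = (h : G)} →
      ¬ (∀ g : 𝔾, π g ∈ H → ∃ c : ℂ, ρ g v = c • v)) := by
  classical
  have hcancel : ∀ c d : ℂ, c • v = d • v → c = d := fun c d h =>
    smul_left_injective ℂ hv h
  -- the subgroup of elements over `H` fixing `v`
  have mulmem : ∀ {a b : 𝔾}, (π a ∈ H ∧ ρ a v = v) → (π b ∈ H ∧ ρ b v = v) →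
      (π (a * b) ∈ H ∧ ρ (a * b) v = v) := by
    rintro a b ⟨ha1, ha2⟩ ⟨hb1, hb2⟩
    refine ⟨by rw [map_mul]; exact H.mul_mem ha1 hb1, ?_⟩
    rw [map_mul, Module.End.mul_apply, hb2, ha2]
  let S : Subgroup 𝔾 :=
  { carrier := {g | π g ∈ H ∧ ρ g v = v}
    one_mem' := ⟨by rw [map_one]; exact H.one_mem, by simp⟩
    mul_mem' := fun ha hb => mulmem ha hb
    inv_mem' := by
      rintro a ⟨ha1, ha2⟩
      refine ⟨by rw [map_inv]; exact H.inv_mem ha1, ?_⟩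
      have h1 : ρ a⁻¹ (ρ a v) = v := by
        rw [← Module.End.mul_apply, ← map_mul, inv_mul_cancel, map_one,
          Module.End.one_apply]
      rwa [ha2] at h1 }
  have hSmem : ∀ g : 𝔾, g ∈ S ↔ π g ∈ H ∧ ρ g v = v := fun g => Iff.rfl
  -- π is injective on S
  have hinj : ∀ g₁ g₂ : 𝔾, g₁ ∈ S → g₂ ∈ S → π g₁ = π g₂ → g₁ = g₂ := by
    intro g₁ g₂ h1 h2 heq
    have hk : g₁ * g₂⁻¹ ∈ π.ker := by
      rw [MonoidHom.mem_ker, map_mul, map_inv, heq, mul_inv_cancel]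
    rw [hker] at hk
    obtain ⟨z, hz⟩ := hk
    have hv2 : ρ (g₁ * g₂⁻¹) v = v := (mulmem h1 (S.inv_mem h2)).2
    rw [← hz, hscalar] at hv2
    have hz1 : (z : ℂ) = 1 := hcancel _ _ (by rw [hv2, one_smul])
    have hz2 : z = 1 := by ext1; rw [hz1, Circle.coe_one]
    rw [hz2, map_one] at hz
    rw [← mul_inv_eq_one, ← hz]
  -- promoting a semi-invariant element to an invariant one over the same image
  have promote : ∀ g : 𝔾, π g ∈ H → (∃ c : ℂ, ρ g v = c • v) →
      ∃ g' ∈ S, π g' = π g := by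
    rintro g hg ⟨c, hc⟩
    have hpow : ∀ m : ℕ, ρ (g ^ m) v = c ^ m • v := by
      intro m
      induction m with
      | zero => simp
      | succ k ih =>
        rw [pow_succ, map_mul, Module.End.mul_apply, hc, map_smul, ih,
          smul_smul, pow_succ, mul_comm]
    have hgn : g ^ (Nat.card G) ∈ π.ker := by
      rw [MonoidHom.mem_ker, map_pow, pow_card_eq_one']
    rw [hker] at hgn
    obtain ⟨z, hz⟩ := hgn
    have hzc : (z : ℂ) • v = c ^ (Nat.card G) • v := by
      rw [← hscalar, hz, hpow]
    have hcz : c ^ Nat.card G = (z : ℂ) := (hcancel _ _ hzc).symm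
    have hnorm : ‖c‖ = 1 := by
      have h1 : ‖c‖ ^ Nat.card G = 1 := by
        rw [← norm_pow, hcz, Circle.norm_coe]
      have h2 : (0:ℝ) ≤ ‖c‖ := norm_nonneg _
      have hn0 : Nat.card G ≠ 0 := Nat.card_pos.ne'
      rcases (pow_eq_one_iff_cases).mp h1 with h' | h' | h'
      · omega
      · exact h'
      · linarith [h'.1]
    let u : Circle := ⟨c, mem_sphere_zero_iff_norm.2 hnorm⟩
    have hπu : π (ι u⁻¹) = 1 := by
      have : ι u⁻¹ ∈ π.ker := by rw [hker]; exact ⟨u⁻¹, rfl⟩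
      rwa [MonoidHom.mem_ker] at this
    refine ⟨ι u⁻¹ * g, ⟨?_, ?_⟩, ?_⟩
    · rw [map_mul, hπu, one_mul]; exact hg
    · have hc0 : c ≠ 0 := by
        intro h0; rw [h0, norm_zero] at hnorm; norm_num at hnorm
      rw [map_mul, Module.End.mul_apply, hc, map_smul, hscalar, smul_smul,
        Circle.coe_inv]
      have hu : (u : ℂ)⁻¹ = c⁻¹ := rfl
      rw [hu, mul_inv_cancel₀ hc0, one_smul]
    · rw [map_mul, hπu, one_mul]
  -- main equivalence
  have main : (∀ g : 𝔾, π g ∈ H → ∃ c : ℂ, ρ g v = c • v) ↔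
      ∃! s : {s : H →* 𝔾 // ∀ h : H, π (s h) = (h : G)},
        ∀ h : H, ρ (s.1 h) v = v := by
    constructor
    · intro hall
      -- the homomorphism S →* H
      let φ : S →* H := (π.comp S.subtype).codRestrict H (fun g => g.2.1)
      have hφinj : Function.Injective φ := by
        intro a b hab
        have : π (a : 𝔾) = π (b : 𝔾) := congrArg Subtype.val hab
        exact Subtype.ext (hinj _ _ a.2 b.2 this)
      have hφsurj : Function.Surjective φ := by
        intro h
        obtain ⟨g, hg⟩ := hπ (h : G)
        obtain ⟨g', hg'S, hg'π⟩ := promote g (by rw [hg]; exact h.2)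
          (hall g (by rw [hg]; exact h.2))
        exact ⟨⟨g', hg'S⟩, Subtype.ext (by show π g' = (h : G); rw [hg'π, hg])⟩
      let e : S ≃* H := MulEquiv.ofBijective φ ⟨hφinj, hφsurj⟩
      have heπ : ∀ h : H, π ((e.symm h : S) : 𝔾) = (h : G) := by
        intro h
        have : φ (e.symm h) = h := e.apply_symm_apply h
        exact congrArg Subtype.val this
      refine ⟨⟨S.subtype.comp e.symm.toMonoidHom, heπ⟩, fun h => (e.symm h).2.2, ?_⟩
      rintro ⟨s', hs'⟩ hfix
      apply Subtype.ext
      ext h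
      show s' h = ((e.symm h : S) : 𝔾)
      have hmem : s' h ∈ S := ⟨by rw [hs' h]; exact h.2, hfix h⟩
      exact hinj _ _ hmem (e.symm h).2 (by rw [hs' h, heπ h])
    · rintro ⟨s, hsfix, _⟩ g hg
      set h : H := ⟨π g, hg⟩
      have hk : g * (s.1 h)⁻¹ ∈ π.ker := by
        rw [MonoidHom.mem_ker, map_mul, map_inv, s.2 h, mul_inv_cancel]
      rw [hker] at hk
      obtain ⟨z, hz⟩ := hk
      have hg' : g = ι z * s.1 h := by
        rw [hz, inv_mul_cancel_right]
      refine ⟨(z : ℂ), ?_⟩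
      rw [hg', map_mul, Module.End.mul_apply, hsfix h, hscalar]
  refine ⟨main, fun hemp hall => ?_⟩
  obtain ⟨s, -, -⟩ := main.mp hall
  exact hemp.elim s
end

section
/- Let p be a prime, n ≥ 2, and 0 ≤ d ≤ pn−2 with d = pq + r, 0 ≤ r ≤ p−1. Then Σ_{(a,b,c): pa+b+c=d, 0≤a≤n−2, 0≤b,c≤p−1} (−1)^a C(n−2,a) = (r+1)·(−1)^q C(n−2,q) + (p−1−r)·(−1)^{q−1} C(n−2,q−1), with the conventions C(n−2,k) = 0 for k < 0 or k > n−2. Combined with Lucas' theorem applied to C(pn−2,d) with pn−2 = p(n−2) + (2p−2) rewritten in base p as digits (n−1, p−2), this sum is congruent mod p to (−1)^d C(pn−2,d). -/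
open Finset

lemma aux_card1 (p r : ℕ) (hr : r < p) :
    (((Finset.range p) ×ˢ (Finset.range p)).filter (fun y : ℕ × ℕ => y.1 + y.2 = r)).card
      = r + 1 := by
  have himg : (((Finset.range p) ×ˢ (Finset.range p)).filter (fun y : ℕ × ℕ => y.1 + y.2 = r))
      = (Finset.range (r + 1)).image (fun b => (b, r - b)) := by
    ext ⟨b, c⟩
    simp only [mem_filter, mem_product, mem_range, mem_image, Prod.mk.injEq]
    constructor
    · rintro ⟨⟨hb, hc⟩, h⟩
      exact ⟨b, by omega, rfl, by omega⟩
    · rintro ⟨x, hx, rfl, rfl⟩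
      omega
  rw [himg, Finset.card_image_of_injective _
    (fun a b h => by simpa using congrArg Prod.fst h), card_range]

lemma aux_card2 (p r : ℕ) (hr : r < p) :
    (((Finset.range p) ×ˢ (Finset.range p)).filter (fun y : ℕ × ℕ => y.1 + y.2 = p + r)).card
      = p - 1 - r := by
  have himg : (((Finset.range p) ×ˢ (Finset.range p)).filter
        (fun y : ℕ × ℕ => y.1 + y.2 = p + r))
      = (Finset.Ico (r + 1) p).image (fun b => (b, p + r - b)) := by
    ext ⟨b, c⟩
    simp only [mem_filter, mem_product, mem_range, mem_image, Finset.mem_Ico, Prod.mk.injEq]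
    constructor
    · rintro ⟨⟨hb, hc⟩, h⟩
      exact ⟨b, by omega, rfl, by omega⟩
    · rintro ⟨x, hx, rfl, rfl⟩
      omega
  rw [himg, Finset.card_image_of_injective _
    (fun a b h => by simpa using congrArg Prod.fst h), Nat.card_Ico]
  omega

lemma aux_choose_p1 (p : ℕ) (hp : p.Prime) (k : ℕ) (hk : k ≤ p - 1) :
    (((p - 1).choose k : ℕ) : ZMod p) = (-1) ^ k := by
  induction k with
  | zero => simp
  | succ k ih =>
    have h2 := hp.two_le
    have pascal : p.choose (k + 1) = (p - 1).choose k + (p - 1).choose (k + 1) := by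
      conv_lhs => rw [show p = (p - 1) + 1 by omega]
      rw [Nat.choose_succ_succ]
    have hz : ((p.choose (k + 1) : ℕ) : ZMod p) = 0 := by
      rw [ZMod.natCast_eq_zero_iff]
      exact hp.dvd_choose_self (by omega) (by omega)
    rw [pascal] at hz
    push_cast at hz ⊢
    rw [ih (by omega)] at hz
    rw [pow_succ]
    linear_combination hz

lemma aux_choose_p2 (p : ℕ) (hp : p.Prime) (r : ℕ) (hr : r ≤ p - 1) :
    (((p - 2).choose r : ℕ) : ZMod p) = (-1) ^ r * ((r : ZMod p) + 1) := by
  induction r with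
  | zero => simp
  | succ r ih =>
    have h2 := hp.two_le
    have pascal : (p - 1).choose (r + 1) = (p - 2).choose r + (p - 2).choose (r + 1) := by
      conv_lhs => rw [show p - 1 = (p - 2) + 1 by omega]
      rw [Nat.choose_succ_succ]
    have h1 := aux_choose_p1 p hp (r + 1) (by omega)
    rw [pascal] at h1
    push_cast at h1 ⊢
    rw [ih (by omega)] at h1
    rw [pow_succ] at h1 ⊢
    linear_combination h1

/-- **Closed form of the elliptic-surface congruence.** For `d = pq + r` with
`0 ≤ r ≤ p−1`, the sum `Σ (−1)^a C(n−2,a)` over triples `(a,b,c)` with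
`0 ≤ a ≤ n−2`, `0 ≤ b,c ≤ p−1`, `pa+b+c = d`, equals
`(r+1)(−1)^q C(n−2,q) + (p−1−r)(−1)^{q−1} C(n−2,q−1)` (with the convention that the
second term vanishes for `q = 0`, i.e. `C(n−2,k) = 0` for `k < 0`; `Nat.choose`
already vanishes for `k > n−2`); and by Lucas' theorem this closed form is congruent
mod `p` to `(−1)^d C(pn−2,d)`. -/
theorem elliptic_congruence_closed_form (p n d q r : ℕ) (hp : p.Prime) (hn : 2 ≤ n)
    (hd : d ≤ p * n - 2) (hqr : d = p * q + r) (hr : r ≤ p - 1) :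
    (∑ t ∈ ((Finset.range (n - 1)) ×ˢ (Finset.range p) ×ˢ (Finset.range p)).filter
        (fun t => p * t.1 + t.2.1 + t.2.2 = d),
      (-1 : ℤ) ^ t.1 * ((n - 2).choose t.1 : ℤ)) =
      ((r : ℤ) + 1) * (-1) ^ q * ((n - 2).choose q : ℤ) +
        (if 1 ≤ q then
          ((p : ℤ) - 1 - (r : ℤ)) * (-1) ^ (q - 1) * ((n - 2).choose (q - 1) : ℤ)
        else 0) ∧
    Int.ModEq (p : ℤ)
      ((-1 : ℤ) ^ d * ((p * n - 2).choose d : ℤ))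
      (((r : ℤ) + 1) * (-1) ^ q * ((n - 2).choose q : ℤ) +
        (if 1 ≤ q then
          ((p : ℤ) - 1 - (r : ℤ)) * (-1) ^ (q - 1) * ((n - 2).choose (q - 1) : ℤ)
        else 0)) := by
  classical
  have h2 := hp.two_le
  have hrp : r < p := by omega
  set cnt : ℕ → ℕ := fun a =>
    (((Finset.range p) ×ˢ (Finset.range p)).filter
      (fun y : ℕ × ℕ => p * a + y.1 + y.2 = d)).card with hcnt
  set G : ℕ → ℤ := fun a => (cnt a : ℤ) * ((-1) ^ a * ((n - 2).choose a : ℤ)) with hG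
  -- zero lemma
  have hzero : ∀ a : ℕ, a ≠ q → (q = 0 ∨ a ≠ q - 1) → cnt a = 0 := by
    intro a ha ha'
    show (((Finset.range p) ×ˢ (Finset.range p)).filter
      (fun y : ℕ × ℕ => p * a + y.1 + y.2 = d)).card = 0
    rw [Finset.card_eq_zero, Finset.filter_eq_empty_iff]
    rintro ⟨b, c⟩ hmem
    simp only [mem_product, mem_range] at hmem
    obtain ⟨hb, hc⟩ := hmem
    intro heq
    rw [hqr] at heq
    rcases Nat.lt_or_ge q a with hcase | hcase
    · have h1 : p * q + p ≤ p * a := by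
        calc p * q + p = p * (q + 1) := by ring
          _ ≤ p * a := Nat.mul_le_mul_left _ (by omega)
      generalize hA : p * a = A at h1 heq
      generalize hB : p * q = B at h1 heq
      omega
    · have haq : a + 2 ≤ q := by omega
      have h1 : p * a + 2 * p ≤ p * q := by
        calc p * a + 2 * p = p * (a + 2) := by ring
          _ ≤ p * q := Nat.mul_le_mul_left _ haq
      generalize hA : p * a = A at h1 heq
      generalize hB : p * q = B at h1 heq
      omega
  have hcntq : cnt q = r + 1 := by
    show (((Finset.range p) ×ˢ (Finset.range p)).filter
      (fun y : ℕ × ℕ => p * q + y.1 + y.2 = d)).card = r + 1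
    have heq : (((Finset.range p) ×ˢ (Finset.range p)).filter
        (fun y : ℕ × ℕ => p * q + y.1 + y.2 = d))
        = (((Finset.range p) ×ˢ (Finset.range p)).filter (fun y : ℕ × ℕ => y.1 + y.2 = r)) := by
      apply Finset.filter_congr
      intro y _
      rw [hqr, add_assoc, Nat.add_left_cancel_iff]
    rw [heq, aux_card1 p r hrp]
  -- the sum reduction
  have key : (∑ t ∈ ((Finset.range (n - 1)) ×ˢ (Finset.range p) ×ˢ (Finset.range p)).filter
        (fun t => p * t.1 + t.2.1 + t.2.2 = d),
      (-1 : ℤ) ^ t.1 * ((n - 2).choose t.1 : ℤ)) = ∑ a ∈ Finset.range (n - 1), G a := by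
    rw [Finset.sum_filter, Finset.sum_product]
    refine Finset.sum_congr rfl fun a _ => ?_
    dsimp only
    rw [← Finset.sum_filter, Finset.sum_const, nsmul_eq_mul]
  set M := max (n - 1) (q + 1) with hM
  have hqM : q + 1 ≤ M := le_max_right _ _
  have hnM : n - 1 ≤ M := le_max_left _ _
  have hext : ∑ a ∈ Finset.range (n - 1), G a = ∑ a ∈ Finset.range M, G a := by
    apply Finset.sum_subset
    · exact Finset.range_subset_range.mpr hnM
    · intro a _ ha
      rw [Finset.mem_range, not_lt] at ha
      have hch : (n - 2).choose a = 0 := Nat.choose_eq_zero_of_lt (by omega)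
      simp [hG, hch]
  have part1 : (∑ t ∈ ((Finset.range (n - 1)) ×ˢ (Finset.range p) ×ˢ (Finset.range p)).filter
        (fun t => p * t.1 + t.2.1 + t.2.2 = d),
      (-1 : ℤ) ^ t.1 * ((n - 2).choose t.1 : ℤ)) =
      ((r : ℤ) + 1) * (-1) ^ q * ((n - 2).choose q : ℤ) +
        (if 1 ≤ q then
          ((p : ℤ) - 1 - (r : ℤ)) * (-1) ^ (q - 1) * ((n - 2).choose (q - 1) : ℤ)
        else 0) := by
    rw [key, hext]
    rcases Nat.eq_zero_or_pos q with hq0 | hqpos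
    · subst hq0
      have hsingle : ∑ a ∈ Finset.range M, G a = G 0 := by
        apply Finset.sum_eq_single_of_mem 0 (Finset.mem_range.mpr (by omega))
        intro b _ hb
        simp only [hG]
        simp [hzero b hb (Or.inl rfl)]
      rw [hsingle, if_neg (by omega : ¬ (1 : ℕ) ≤ 0)]
      simp only [hG, hcntq]
      push_cast
      ring
    · obtain ⟨t, rfl⟩ : ∃ t, q = t + 1 := ⟨q - 1, by omega⟩
      have hcntt : cnt t = p - 1 - r := by
        show (((Finset.range p) ×ˢ (Finset.range p)).filter
          (fun y : ℕ × ℕ => p * t + y.1 + y.2 = d)).card = p - 1 - r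
        have heq : (((Finset.range p) ×ˢ (Finset.range p)).filter
            (fun y : ℕ × ℕ => p * t + y.1 + y.2 = d))
            = (((Finset.range p) ×ˢ (Finset.range p)).filter
              (fun y : ℕ × ℕ => y.1 + y.2 = p + r)) := by
          apply Finset.filter_congr
          intro y _
          rw [hqr, show p * (t + 1) + r = p * t + (p + r) by ring, add_assoc,
            Nat.add_left_cancel_iff]
        rw [heq, aux_card2 p r hrp]
      have hmemq : t + 1 ∈ Finset.range M := Finset.mem_range.mpr (by omega)
      have hmemt : t ∈ (Finset.range M).erase (t + 1) := by
        rw [Finset.mem_erase, Finset.mem_range]; omega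
      rw [← Finset.add_sum_erase _ G hmemq, ← Finset.add_sum_erase _ G hmemt]
      have hrest : ∑ a ∈ ((Finset.range M).erase (t + 1)).erase t, G a = 0 := by
        apply Finset.sum_eq_zero
        intro a ha
        rw [Finset.mem_erase, Finset.mem_erase] at ha
        simp only [hG]
        simp [hzero a ha.2.1 (Or.inr (by omega))]
      rw [hrest, add_zero, if_pos (by omega : 1 ≤ t + 1)]
      simp only [hG, hcntq, hcntt, Nat.add_sub_cancel]
      have hcast : ((p - 1 - r : ℕ) : ℤ) = (p : ℤ) - 1 - (r : ℤ) := by omega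
      rw [hcast]
      push_cast
      ring
  refine ⟨part1, ?_⟩
  -- Part 2: Lucas
  haveI : Fact p.Prime := ⟨hp⟩
  rw [← ZMod.intCast_eq_intCast_iff]
  obtain ⟨m, rfl⟩ : ∃ m, n = m + 2 := ⟨n - 2, by omega⟩
  have lucas := Choose.choose_modEq_choose_mod_mul_choose_div
    (p := p) (n := p * (m + 2) - 2) (k := d)
  have hPm : p * (m + 2) = p * m + 2 * p := by ring
  have hPm1 : p * (m + 1) = p * m + p := by ring
  have hmainrep : p * (m + 2) - 2 = p * (m + 1) + (p - 2) := by
    generalize hA : p * m = A at hPm hPm1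
    rw [hPm, hPm1]
    omega
  have hmod1 : (p * (m + 2) - 2) % p = p - 2 := by
    rw [hmainrep, Nat.mul_add_mod, Nat.mod_eq_of_lt (by omega)]
  have hdiv1 : (p * (m + 2) - 2) / p = m + 1 := by
    rw [hmainrep, Nat.mul_add_div (by omega), Nat.div_eq_of_lt (by omega), add_zero]
  have hmod2 : d % p = r := by
    rw [hqr, Nat.mul_add_mod, Nat.mod_eq_of_lt hrp]
  have hdiv2 : d / p = q := by
    rw [hqr, Nat.mul_add_div (by omega), Nat.div_eq_of_lt hrp, add_zero]
  rw [hmod1, hdiv1, hmod2, hdiv2] at lucas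
  have lucas' : (((p * (m + 2) - 2).choose d : ℕ) : ZMod p)
      = (((p - 2).choose r : ℕ) : ZMod p) * (((m + 1).choose q : ℕ) : ZMod p) := by
    have h := (ZMod.intCast_eq_intCast_iff _ _ _).mpr lucas
    push_cast at h ⊢
    exact h
  push_cast
  rw [lucas', aux_choose_p2 p hp r (by omega)]
  have hneg1 : ((-1 : ZMod p)) ^ d = (-1) ^ q * (-1) ^ r := by
    rw [hqr, pow_add, pow_mul, neg_one_pow_char (ZMod p) p]
  rw [hneg1]
  have hsq : ((-1 : ZMod p)) ^ r * (-1) ^ r = 1 := by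
    rw [← pow_add, ← two_mul, pow_mul]; norm_num
  rcases Nat.eq_zero_or_pos q with hq0 | hqpos
  · subst hq0
    rw [if_neg (by omega : ¬ (1:ℕ) ≤ 0)]
    simp only [Nat.choose_zero_right, Nat.cast_one, pow_zero, mul_one, one_mul]
    linear_combination ((r : ZMod p) + 1) * hsq
  · obtain ⟨t, rfl⟩ : ∃ t, q = t + 1 := ⟨q - 1, by omega⟩
    rw [if_pos (by omega : 1 ≤ t + 1)]
    simp only [Nat.add_sub_cancel]
    have hpascal : ((((m + 1).choose (t + 1) : ℕ)) : ZMod p)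
        = ((m.choose t : ℕ) : ZMod p) + ((m.choose (t + 1) : ℕ) : ZMod p) := by
      rw [Nat.choose_succ_succ]; push_cast; ring
    rw [hpascal]
    have hpz : ((p : ℕ) : ZMod p) = 0 := ZMod.natCast_self p
    rw [hpz, pow_succ]
    linear_combination (-((r : ZMod p) + 1) * (-1 : ZMod p) ^ t *
      ((m.choose t : ZMod p) + (m.choose (t + 1) : ZMod p))) * hsq
end
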